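/- Let T be a tournament on a finite vertex set V and let x, y ∈ V be distinct vertices such that for every z ∈ V with z ∉ {x, y}, the edge between x and z is directed from x to z if and only if the edge between y and z is directed from y to z. Then T contains a directed cycle if and only if the subtournament of T induced on V \ {y} contains a directed cycle. -/

import Mathlib

/-- A directed cycle in a relation `T`: at least three distinct vertices, each with an edge
to the next, cyclically. -/
def HasCycle {V : Type*} (T : V → V → Prop) : Prop :=
  ∃ (k : ℕ) (f : Fin (k + 3) → V), Function.Injective f ∧ ∀ i, T (f i) (f (i + 1))

lemma fin_succ_eq {n a b : ℕ} (ha : a < n+3) (hb : b < n+3) (h : a + 1 = b) :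
    (⟨a,ha⟩ : Fin (n+3)) + 1 = ⟨b,hb⟩ := by
  apply Fin.ext
  simp only [Fin.val_add, Fin.val_one, Fin.val_mk]
  rw [Nat.mod_eq_of_lt (by omega)]; exact h

lemma fin_wrap {n : ℕ} (ha : n + 2 < n + 3) (hb : 0 < n + 3) :
    (⟨n+2, ha⟩ : Fin (n+3)) + 1 = ⟨0, hb⟩ := by
  apply Fin.ext
  simp only [Fin.val_add, Fin.val_one, Fin.val_mk]
  simp

lemma fin_val_add_one {n : ℕ} (i : Fin (n+3)) : (i + 1).val = (i.val + 1) % (n + 3) := by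
  simp only [Fin.val_add, Fin.val_one]

lemma three_cycle {V : Type*} (T : V → V → Prop)
    (hT : ∀ a b : V, a ≠ b → (T a b ↔ ¬ T b a)) :
    ∀ (k : ℕ) (f : Fin (k + 3) → V), Function.Injective f → (∀ i, T (f i) (f (i + 1))) →
      ∃ a b c : V, a ≠ b ∧ b ≠ c ∧ c ≠ a ∧ T a b ∧ T b c ∧ T c a := by
  intro k
  induction k with
  | zero =>
    intro f hinj hf
    refine ⟨f 0, f 1, f 2, ?_, ?_, ?_, ?_, ?_, ?_⟩
    · intro hh; exact absurd (hinj hh) (by decide)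
    · intro hh; exact absurd (hinj hh) (by decide)
    · intro hh; exact absurd (hinj hh) (by decide)
    · have := hf 0; simpa using this
    · have := hf 1; simpa using this
    · have := hf 2; simpa using this
  | succ k ih =>
    intro f hinj hf
    have h02 : (⟨0, by omega⟩ : Fin (k+1+3)) ≠ ⟨2, by omega⟩ := by
      intro hh; simpa using congrArg Fin.val hh
    have hne : f ⟨0, by omega⟩ ≠ f ⟨2, by omega⟩ := fun hh => h02 (hinj hh)
    by_cases hc : T (f ⟨2, by omega⟩) (f ⟨0, by omega⟩)
    · refine ⟨f ⟨0, by omega⟩, f ⟨1, by omega⟩, f ⟨2, by omega⟩, ?_, ?_, hne.symm, ?_, ?_, hc⟩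
      · intro hh; have := hinj hh; simpa using congrArg Fin.val this
      · intro hh; have := hinj hh; simpa using congrArg Fin.val this
      · have := hf ⟨0, by omega⟩
        rwa [fin_succ_eq (by omega) (by omega) rfl] at this
      · have := hf ⟨1, by omega⟩
        rwa [fin_succ_eq (by omega) (by omega) rfl] at this
    · have h02' : T (f ⟨0, by omega⟩) (f ⟨2, by omega⟩) := ((hT _ _ hne).mpr hc)
      set g : Fin (k + 3) → V := fun i =>
        f ⟨if i.val = 0 then 0 else i.val + 1, by have := i.isLt; split <;> omega⟩ with hg
      apply ih g
      · intro i j hij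
        have hv : (⟨if i.val = 0 then 0 else i.val + 1,
              by have := i.isLt; split <;> omega⟩ : Fin (k+1+3)).val
            = (⟨if j.val = 0 then 0 else j.val + 1,
              by have := j.isLt; split <;> omega⟩ : Fin (k+1+3)).val :=
          congrArg Fin.val (hinj hij)
        simp only [Fin.val_mk] at hv
        apply Fin.ext
        split_ifs at hv <;> omega
      · intro i
        rcases Nat.lt_or_ge i.val (k + 2) with hlt | hge
        · have h1 : ((i + 1 : Fin (k+3))).val = i.val + 1 := by
            rw [fin_val_add_one, Nat.mod_eq_of_lt (by omega)]
          rcases Nat.eq_zero_or_pos i.val with h0 | hpos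
          · have e1 : g i = f ⟨0, by omega⟩ := by
                simp only [hg]; congr 1; apply Fin.ext; simp [h0]
            rw [e1]
            have e2 : g (i + 1) = f ⟨2, by omega⟩ := by
              simp only [hg]
              congr 1
              apply Fin.ext
              simp [h1, h0]
            rw [e2]; exact h02'
          · have hi0 : i.val ≠ 0 := by omega
            have h10 : i.val + 1 ≠ 0 := by omega
            have e1 : g i = f ⟨i.val + 1, by omega⟩ := by
              simp only [hg]; congr 1; apply Fin.ext; simp [hi0]
            have e2 : g (i + 1) = f ⟨i.val + 2, by omega⟩ := by
              simp only [hg]; congr 1; apply Fin.ext; simp [h1, h10]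
            rw [e1, e2]
            have := hf ⟨i.val + 1, by omega⟩
            convert this using 2
            exact (fin_succ_eq (by omega) (by omega) rfl).symm
        · have hik : i.val = k + 2 := by omega
          have h1 : ((i + 1 : Fin (k+3))).val = 0 := by
            rw [fin_val_add_one, hik]
            simp
          have e1 : g i = f ⟨k + 3, by omega⟩ := by
            simp only [hg]; congr 1; apply Fin.ext; simp [hik]
          have e2 : g (i + 1) = f ⟨0, by omega⟩ := by
            simp only [hg]; congr 1; apply Fin.ext; simp [h1]
          rw [e1, e2]
          have := hf ⟨k + 3, by omega⟩
          have e : (⟨k + 3, by omega⟩ : Fin (k+1+3)) + 1 = ⟨0, by omega⟩ := by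
            have := fin_wrap (n := k + 1) (by omega) (by omega)
            convert this using 2 <;> omega
          rwa [e] at this

lemma hasCycle_of_three {V : Type*} (T : V → V → Prop) {a b c : V}
    (hab : a ≠ b) (hbc : b ≠ c) (hca : c ≠ a)
    (t1 : T a b) (t2 : T b c) (t3 : T c a) : HasCycle T := by
  refine ⟨0, ![a, b, c], ?_, ?_⟩
  · intro i j hij
    fin_cases i <;> fin_cases j <;> simp_all
  · intro i
    fin_cases i <;> simpa


/-- If `x ≠ y` are vertices of a tournament `T` on a finite vertex set such that every other
vertex `z` receives its edge with `x` in the same direction as its edge with `y` (the edge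
goes from `x` to `z` iff it goes from `y` to `z`), then `T` has a directed cycle iff the
subtournament induced on `V \ {y}` has a directed cycle. -/
theorem identify_twin_vertices {V : Type*} [Fintype V] [DecidableEq V]
    (T : V → V → Prop) (hT : ∀ a b : V, a ≠ b → (T a b ↔ ¬ T b a))
    (x y : V) (hxy : x ≠ y)
    (h : ∀ z : V, z ≠ x → z ≠ y → (T x z ↔ T y z)) :
    HasCycle T ↔ HasCycle (fun a b : {v : V // v ≠ y} => T a.1 b.1) := by
  set S : {v : V // v ≠ y} → {v : V // v ≠ y} → Prop := fun a b => T a.1 b.1 with hS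
  have lift3 : ∀ a b c : V, a ≠ y → b ≠ y → c ≠ y → a ≠ b → b ≠ c → c ≠ a →
      T a b → T b c → T c a → HasCycle S := by
    intro a b c ha hb hc hab hbc hca t1 t2 t3
    exact hasCycle_of_three S (a := ⟨a, ha⟩) (b := ⟨b, hb⟩) (c := ⟨c, hc⟩)
      (by simpa [Subtype.ext_iff] using hab)
      (by simpa [Subtype.ext_iff] using hbc)
      (by simpa [Subtype.ext_iff] using hca) t1 t2 t3
  have fixy : ∀ b c : V, b ≠ y → c ≠ y → b ≠ c → T y b → T b c → T c y → HasCycle S := by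
    intro b c hb hc hbc t1 t2 t3
    have hxb : x ≠ b := by
      intro e
      subst e
      have hcx : c ≠ x := fun e' => hbc (e'.symm)
      have : T y c := (h c hcx hc).mp t2
      exact ((hT c y hc).mp t3) this
    have hxc : x ≠ c := by
      intro e
      subst e
      have hbx : b ≠ x := hbc
      have : T x b := (h b hbx hb).mpr t1
      exact ((hT b x hbx).mp t2) this
    have Txb : T x b := (h b (Ne.symm hxb) hb).mpr t1
    have Tcx : T c x := by
      have hyc : ¬ T y c := (hT c y hc).mp t3
      have hxc' : ¬ T x c := fun tx => hyc ((h c (Ne.symm hxc) hc).mp tx)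
      exact (hT c x (Ne.symm hxc)).mpr hxc'
    exact lift3 x b c hxy hb hc hxb hbc (Ne.symm hxc) Txb t2 Tcx
  constructor
  · rintro ⟨k, f, hinj, hf⟩
    obtain ⟨a, b, c, hab, hbc, hca, t1, t2, t3⟩ := three_cycle T hT k f hinj hf
    by_cases hya : y = a
    · subst hya
      exact fixy b c (Ne.symm hab) hca hbc t1 t2 t3
    by_cases hyb : y = b
    · subst hyb
      exact fixy c a (Ne.symm hbc) hab hca t2 t3 t1
    by_cases hyc : y = c
    · subst hyc
      exact fixy a b (Ne.symm hca) hbc hab t3 t1 t2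
    · exact lift3 a b c (Ne.symm hya) (Ne.symm hyb) (Ne.symm hyc) hab hbc hca t1 t2 t3
  · rintro ⟨k, f, hinj, hf⟩
    exact ⟨k, fun i => (f i).1, fun i j hij => hinj (Subtype.ext hij), fun i => hf i⟩
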